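/- The total F₂-dimension of the cohomology ker(d)/im(d) of the complex (SC(T), d) equals 1 if T admits a perfect matching, and equals 0 otherwise; in particular it is at most 1. -/

import Mathlib

open Polynomial Matrix

attribute [local instance] Classical.propDecidable

namespace Seifert

variable {V : Type} [Fintype V]

/-- A matching of a graph `G`: a finite set of edges of `G` that are pairwise disjoint. -/
def IsMatching (G : SimpleGraph V) (R : Finset (Sym2 V)) : Prop :=
  (∀ e ∈ R, e ∈ G.edgeSet) ∧
    ∀ e ∈ R, ∀ f ∈ R, e ≠ f → ∀ v : V, v ∈ e → v ∉ f

/-- A perfect matching: a matching covering every vertex. -/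
def IsPerfectMatching (G : SimpleGraph V) (R : Finset (Sym2 V)) : Prop :=
  IsMatching G R ∧ ∀ v : V, ∃ e ∈ R, v ∈ e

/-- A configuration on `G`: a matching (the set of red edges) together with an assignment
of a sign (`true` = plus, `false` = minus) to every vertex not covered by a red edge;
vertices covered by a red edge get `none`. -/
structure Config (G : SimpleGraph V) where
  red : Finset (Sym2 V)
  matching : IsMatching G red
  sign : V → Option Bool
  sign_none : ∀ v : V, sign v = none ↔ ∃ e ∈ red, v ∈ e

instance (G : SimpleGraph V) : Finite (Config G) :=
  Finite.of_injective (fun C => (C.red, C.sign)) (by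
    rintro ⟨r, hr, s, hs⟩ ⟨r', hr', s', hs'⟩ h
    simp only [Prod.mk.injEq] at h
    obtain ⟨h1, h2⟩ := h
    subst h1; subst h2; rfl)

noncomputable instance (G : SimpleGraph V) : Fintype (Config G) := Fintype.ofFinite _

/-- The grading `Q`: the number of minuses. -/
noncomputable def Qg {G : SimpleGraph V} (C : Config G) : ℕ :=
  (Finset.univ.filter fun v : V => C.sign v = some false).card

/-- The grading `E`: the number of minuses plus the number of red edges. -/
noncomputable def Eg {G : SimpleGraph V} (C : Config G) : ℕ := Qg C + C.red.card

/-- `DStep C C'` holds iff `C'` is one of the summands of `D(C)`: it is obtained from `C`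
by deleting one red edge `e` and assigning a plus to one endpoint of `e` and a minus to
the other. -/
def DStep {G : SimpleGraph V} (C C' : Config G) : Prop :=
  ∃ e ∈ C.red, C'.red = C.red.erase e ∧
    (∀ x : V, x ∉ e → C'.sign x = C.sign x) ∧
    ∃ u v : V, e = s(u, v) ∧ C'.sign u = some true ∧ C'.sign v = some false

/-- `dStep C C'` holds iff `C'` is one of the summands of `d(C)`: it is obtained from `C`
by changing the sign of one vertex from plus to minus. -/
def dStep {G : SimpleGraph V} (C C' : Config G) : Prop :=
  C'.red = C.red ∧ ∃ w : V, C.sign w = some true ∧ C'.sign w = some false ∧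
    ∀ x : V, x ≠ w → C'.sign x = C.sign x

/-- The linear map on spaces of `F₂`-valued functions induced by a relation `r`:
the basis vector of `a` is sent to the sum of the basis vectors of all `b` with `r a b`. -/
noncomputable def sumLin {α β : Type} [Fintype α] (r : α → β → Prop) :
    (α → ZMod 2) →ₗ[ZMod 2] (β → ZMod 2) where
  toFun f b := ∑ a : α, if r a b then f a else 0
  map_add' f g := by
    funext b
    simp only [Pi.add_apply]
    rw [← Finset.sum_add_distrib]
    exact Finset.sum_congr rfl fun a _ => by by_cases h : r a b <;> simp [h]
  map_smul' c f := by
    funext b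
    simp only [RingHom.id_apply, Pi.smul_apply, smul_eq_mul, Finset.mul_sum]
    exact Finset.sum_congr rfl fun a _ => by by_cases h : r a b <;> simp [h]

/-- The differential `D` on the total Seifert complex `SC(T)`. -/
noncomputable def Dmap (G : SimpleGraph V) :
    (Config G → ZMod 2) →ₗ[ZMod 2] (Config G → ZMod 2) :=
  sumLin DStep

/-- The differential `d` on the total Seifert complex `SC(T)`. -/
noncomputable def dmap (G : SimpleGraph V) :
    (Config G → ZMod 2) →ₗ[ZMod 2] (Config G → ZMod 2) :=
  sumLin dStep

/-- The graded piece `SC^k(T,n)`: the `F₂`-vector space with basis the configurations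
with `Q = k` and `E = n`. -/
abbrev SC (G : SimpleGraph V) (k n : ℤ) : Type :=
  {C : Config G // (Qg C : ℤ) = k ∧ (Eg C : ℤ) = n} → ZMod 2

/-- The differential `D` between graded pieces. (Mathematically it is nonzero only
from `SC^k(T,n)` to `SC^{k+1}(T,n)`.) -/
noncomputable def Dgr (G : SimpleGraph V) (k n k' n' : ℤ) :
    SC G k n →ₗ[ZMod 2] SC G k' n' :=
  sumLin fun C C' => DStep C.1 C'.1

/-- The dimension of the cohomology `ker g / im f` at the middle term of `A —f→ B —g→ C`
(taking the image of `f` intersected with the kernel of `g`). -/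
noncomputable def cohDim {A B M : Type} [AddCommGroup A] [AddCommGroup B] [AddCommGroup M]
    [Module (ZMod 2) A] [Module (ZMod 2) B] [Module (ZMod 2) M]
    (f : A →ₗ[ZMod 2] B) (g : B →ₗ[ZMod 2] M) : ℕ :=
  Module.finrank (ZMod 2)
    (LinearMap.ker g ⧸ (LinearMap.range f).comap (LinearMap.ker g).subtype)

/-- The dimension of the Seifert cohomology `SH^k(T,n)`. -/
noncomputable def SHdim (G : SimpleGraph V) (k n : ℤ) : ℕ :=
  cohDim (Dgr G (k - 1) n k n) (Dgr G k n (k + 1) n)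

/-- The Seifert matrix of a graph with respect to an enumeration of its vertices. -/
noncomputable def seifertMatrix (G : SimpleGraph V) {m : ℕ} (e : V ≃ Fin m) :
    Matrix (Fin m) (Fin m) ℤ := fun i j =>
  if i = j then -1 else if i < j ∧ G.Adj (e.symm i) (e.symm j) then 1 else 0

/-- The Alexander polynomial `det (t S - Sᵀ)` of a graph with respect to an enumeration
of its vertices. -/
noncomputable def alexDet (G : SimpleGraph V) {m : ℕ} (e : V ≃ Fin m) : Polynomial ℤ :=
  let S : Matrix (Fin m) (Fin m) (Polynomial ℤ) :=
    (seifertMatrix G e).map fun a => (Polynomial.C a : Polynomial ℤ)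
  ((X : Polynomial ℤ) • S - Sᵀ).det

/-- The Alexander polynomial of a graph (or forest), defined as the matching polynomial
`Σ_R t^{|R|} (1-t)^{V - 2|R|}`, the sum being over all matchings `R`. -/
noncomputable def alexMatch (G : SimpleGraph V) : Polynomial ℤ :=
  ∑ R : {R : Finset (Sym2 V) // IsMatching G R},
    X ^ R.1.card * (1 - X) ^ (Fintype.card V - 2 * R.1.card)



section Proof

open SimpleGraph

variable {G : SimpleGraph V}

/-- In an acyclic graph there is no infinite non-backtracking walk. -/
lemma no_infinite_walk {G : SimpleGraph V} (hG : G.IsAcyclic) (a : ℕ → V)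
    (hadj : ∀ n, G.Adj (a n) (a (n + 1))) (hback : ∀ n, a (n + 2) ≠ a n) : False := by
  classical
  -- build walks
  have key : ∀ n : ℕ, ∃ w : G.Walk (a 0) (a n), w.IsPath ∧
      w.support = (List.range (n + 1)).map a ∧
      w.edges = (List.range n).map (fun i => s(a i, a (i + 1))) := by
    intro n
    induction n with
    | zero => exact ⟨Walk.nil, by simp, by simp [List.range_succ], by simp⟩
    | succ n ih =>
      obtain ⟨w, hw, hsup, hedg⟩ := ih
      refine ⟨w.concat (hadj n), ?_, ?_, ?_⟩
      · -- path
        rw [Walk.isPath_def, Walk.support_concat, List.nodup_append']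
        refine ⟨hw.support_nodup, List.nodup_singleton _, ?_⟩
        intro x hx hx'
        simp only [List.mem_singleton] at hx'
        subst hx'
        rw [hsup, List.mem_map] at hx
        obtain ⟨k, hk, hka⟩ := hx
        rw [List.mem_range] at hk
        -- a k = a (n+1), k ≤ n
        have hinj : ∀ i ∈ List.range (n+1), ∀ j ∈ List.range (n+1), a i = a j → i = j := by
          have := hw.support_nodup
          rw [hsup] at this
          exact (List.nodup_map_iff_inj_on List.nodup_range).mp this
        -- cases on k
        have hkn : k ≠ n := by
          rintro rfl
          exact (hadj k).ne hka
        rcases Nat.eq_zero_or_pos n with h0 | h0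
        · omega
        · have hkn1' : k ≠ n - 1 := by
            rintro rfl
            exact hback (n-1) ((congrArg a (by omega)).trans hka.symm)
          -- now k ≤ n - 2; build a cycle
          have hmem : a (n+1) ∈ w.support := by
            rw [hsup, List.mem_map]
            exact ⟨k, by rw [List.mem_range]; omega, hka⟩
          set r := w.dropUntil (a (n+1)) hmem with hr
          have hrpath : r.IsPath := hw.dropUntil hmem
          have hcyc : (Walk.cons (hadj n) r).IsCycle := by
            rw [Walk.cons_isCycle_iff]
            refine ⟨hrpath, fun hmem' => ?_⟩
            have : s(a n, a (n+1)) ∈ w.edges := Walk.edges_dropUntil_subset _ hmem hmem'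
            rw [hedg, List.mem_map] at this
            obtain ⟨i, hi, hie⟩ := this
            rw [List.mem_range] at hi
            rw [Sym2.eq_iff] at hie
            rcases hie with ⟨h1, h2⟩ | ⟨h1, h2⟩
            · -- a i = a n, i < n
              have := hinj i (by rw [List.mem_range]; omega) n (by rw [List.mem_range]; omega) h1
              omega
            · -- a i = a (n+1), a (i+1) = a n
              have hi1 : i + 1 = n ∨ i + 1 < n := by omega
              rcases hi1 with h | h
              · -- i = n - 1, a i = a (n+1) contradicts hback
                exact hback i ((congrArg a (by omega)).trans h1.symm)
              · have := hinj (i+1) (by rw [List.mem_range]; omega) n (by rw [List.mem_range]; omega) h2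
                omega
          exact hG _ hcyc
      · rw [Walk.support_concat, hsup]
        simp [List.range_succ]
      · rw [Walk.edges_concat, hedg, List.concat_eq_append, List.range_succ, List.map_append]
        simp
  obtain ⟨w, hw, hsup, -⟩ := key (Fintype.card V)
  have := hw.support_nodup.length_le_card
  rw [hsup, List.length_map, List.length_range] at this
  omega

/-- the partner function of a perfect matching -/
lemma partner {G : SimpleGraph V} {R : Finset (Sym2 V)} (hR : IsPerfectMatching G R) :
    ∃ f : V → V, (∀ v, s(v, f v) ∈ R) ∧ (∀ v, G.Adj v (f v)) ∧ (∀ v, f (f v) = v) ∧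
      (∀ v, ∀ e ∈ R, v ∈ e → e = s(v, f v)) := by
  have hu : ∀ v : V, ∀ e ∈ R, ∀ e' ∈ R, v ∈ e → v ∈ e' → e = e' := by
    intro v e he e' he' hv hv'
    by_contra hne
    exact hR.1.2 e he e' he' hne v hv hv'
  have h : ∀ v : V, ∃ w : V, s(v, w) ∈ R := by
    intro v
    obtain ⟨e, he, hv⟩ := hR.2 v
    obtain ⟨w, rfl⟩ := Sym2.mem_iff_exists.mp hv
    exact ⟨w, he⟩
  choose f hf using h
  have hadj : ∀ v, G.Adj v (f v) := fun v => (G.mem_edgeSet).mp (hR.1.1 _ (hf v))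
  have huniq : ∀ v, ∀ e ∈ R, v ∈ e → e = s(v, f v) := by
    intro v e he hv
    exact hu v e he _ (hf v) hv (Sym2.mem_mk_left v (f v))
  have hinv : ∀ v, f (f v) = v := by
    intro v
    have h1 := huniq (f v) _ (hf v) (Sym2.mem_mk_right v (f v))
    rw [Sym2.eq_swap] at h1
    exact (Sym2.congr_right.mp h1).symm
  exact ⟨f, hf, hadj, hinv, huniq⟩

lemma perfect_matching_unique {G : SimpleGraph V} (hG : G.IsAcyclic)
    {R R' : Finset (Sym2 V)} (hR : IsPerfectMatching G R) (hR' : IsPerfectMatching G R') :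
    R = R' := by
  obtain ⟨f, hf, hfadj, hfinv, hfu⟩ := partner hR
  obtain ⟨g, hg, hgadj, hginv, hgu⟩ := partner hR'
  by_cases hfg : ∀ v, f v = g v
  · ext e
    induction e using Sym2.ind with
    | _ v w =>
      constructor
      · intro he
        rw [hfu v _ he (Sym2.mem_mk_left v w), hfg v]; exact hg v
      · intro he
        rw [hgu v _ he (Sym2.mem_mk_left v w), ← hfg v]; exact hf v
  · push_neg at hfg
    obtain ⟨v₀, hv₀⟩ := hfg
    -- alternating sequence
    let a : ℕ → V := fun n => Nat.rec v₀ (fun n x => if Even n then f x else g x) n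
    have ha0 : a 0 = v₀ := rfl
    have hstep : ∀ n, a (n+1) = if Even n then f (a n) else g (a n) := fun n => rfl
    have hne : ∀ n, f (a n) ≠ g (a n) := by
      intro n
      induction n with
      | zero => exact hv₀
      | succ n ih =>
        rw [hstep n]
        by_cases hn : Even n
        · rw [if_pos hn]
          intro h
          rw [hfinv (a n)] at h
          exact ih ((congrArg g h).trans (hginv _)).symm
        · rw [if_neg hn]
          intro h
          rw [hginv (a n)] at h
          exact ih ((hfinv _).symm.trans (congrArg f h)).symm
    have hadj : ∀ n, G.Adj (a n) (a (n+1)) := by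
      intro n
      rw [hstep n]
      by_cases hn : Even n
      · rw [if_pos hn]; exact hfadj _
      · rw [if_neg hn]; exact hgadj _
    have hback : ∀ n, a (n+2) ≠ a n := by
      intro n
      rw [hstep (n+1), hstep n]
      by_cases hn : Even n
      · have hn1 : ¬ Even (n+1) := by simp [Nat.even_add_one, hn]
        rw [if_neg hn1, if_pos hn]
        intro h
        exact hne n ((hginv (f (a n))).symm.trans (congrArg g h))
      · have hn1 : Even (n+1) := by simpa [Nat.even_add_one] using hn
        rw [if_pos hn1, if_neg hn]
        intro h
        exact (hne n ((hfinv (g (a n))).symm.trans (congrArg f h)).symm).elim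
    exact (no_infinite_walk hG a hadj hback).elim


lemma Config.ext' {C C' : Config G} (h1 : C.red = C'.red) (h2 : C.sign = C'.sign) : C = C' := by
  cases C; cases C'; simp_all

/-- Flip the sign at a vertex (identity on covered vertices). -/
noncomputable def flip (C : Config G) (w : V) : Config G where
  red := C.red
  matching := C.matching
  sign := fun x => if x = w then (C.sign x).map (fun b => !b) else C.sign x
  sign_none := by
    intro v
    rw [← C.sign_none]
    by_cases h : v = w
    · simp [h, Option.map_eq_none_iff]
    · simp [h]

@[simp] lemma flip_red (C : Config G) (w : V) : (flip C w).red = C.red := rfl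

lemma flip_sign_self (C : Config G) (w : V) :
    (flip C w).sign w = (C.sign w).map (fun b => !b) := by simp [flip]

lemma flip_sign_ne (C : Config G) {w x : V} (h : x ≠ w) :
    (flip C w).sign x = C.sign x := by simp [flip, h]

lemma flip_flip (C : Config G) (w : V) : flip (flip C w) w = C := by
  refine Config.ext' ?_ ?_
  · rfl
  funext x
  by_cases h : x = w
  · subst h; cases hs : C.sign x <;> simp [flip, hs]
  · simp [flip, h]

lemma flip_comm (C : Config G) {w w' : V} (h : w ≠ w') :
    flip (flip C w) w' = flip (flip C w') w := by
  refine Config.ext' ?_ ?_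
  · rfl
  funext x
  by_cases h1 : x = w
  · have h2 : x ≠ w' := h1 ▸ h
    simp [flip, h, h1, h2, Ne.symm h]
  · by_cases h2 : x = w' <;> simp [flip, h1, h2, Ne.symm h]

lemma dStep_iff {a C : Config G} :
    dStep a C ↔ ∃ w, C.sign w = some false ∧ a = flip C w := by
  constructor
  · rintro ⟨hred, w, haw, hCw, hagree⟩
    refine ⟨w, hCw, Config.ext' hred.symm ?_⟩
    funext x
    by_cases h : x = w
    · subst h; rw [flip_sign_self, hCw, haw]; rfl
    · rw [flip_sign_ne _ h, hagree x h]
  · rintro ⟨w, hCw, rfl⟩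
    refine ⟨rfl, w, ?_, hCw, fun x hx => (flip_sign_ne _ hx).symm⟩
    rw [flip_sign_self, hCw]; rfl

lemma dmap_apply (x : Config G → ZMod 2) (C : Config G) :
    dmap G x C = ∑ w ∈ Finset.univ.filter (fun w => C.sign w = some false),
      x (flip C w) := by
  have : dmap G x C = ∑ a ∈ Finset.univ.filter (fun a => dStep a C), x a := by
    rw [Finset.sum_filter]; rfl
  rw [this]
  refine (Finset.sum_bij (fun w _ => flip C w) ?_ ?_ ?_ ?_).symm
  · intro w hw
    simp only [Finset.mem_filter, Finset.mem_univ, true_and] at hw ⊢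
    exact dStep_iff.mpr ⟨w, hw, rfl⟩
  · intro w hw w' hw' heq
    simp only [Finset.mem_filter, Finset.mem_univ, true_and] at hw hw'
    by_contra hne
    have h1 : (flip C w).sign w = some true := by
      rw [flip_sign_self, hw]; rfl
    rw [heq, flip_sign_ne _ hne, hw] at h1
    simp at h1
  · intro a ha
    simp only [Finset.mem_filter, Finset.mem_univ, true_and] at ha
    obtain ⟨w, hw, rfl⟩ := dStep_iff.mp ha
    exact ⟨w, by simp [hw], rfl⟩
  · intros; rfl

/-- `Unc R`: some vertex is uncovered by `R`. -/
def Unc (R : Finset (Sym2 V)) : Prop := ∃ v : V, ∀ e ∈ R, v ∉ e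

noncomputable def pick (R : Finset (Sym2 V)) (h : Unc R) : V := h.choose

lemma pick_spec (R : Finset (Sym2 V)) (h : Unc R) : ∀ e ∈ R, pick R h ∉ e := h.choose_spec

lemma sign_ne_none_iff (C : Config G) (v : V) :
    C.sign v ≠ none ↔ ∀ e ∈ C.red, v ∉ e := by
  rw [Ne, C.sign_none v]
  push_neg
  rfl

lemma not_unc_iff (C : Config G) : ¬ Unc C.red ↔ ∀ v : V, C.sign v = none := by
  constructor
  · intro h v
    by_contra hv
    exact h ⟨v, (sign_ne_none_iff C v).mp hv⟩
  · rintro h ⟨v, hv⟩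
    exact ((sign_ne_none_iff C v).mpr hv) (h v)

lemma pick_sign {C : Config G} (h : Unc C.red) : C.sign (pick C.red h) ≠ none :=
  (sign_ne_none_iff C _).mpr (pick_spec C.red h)

/-- The homotopy. -/
noncomputable def hmap (x : Config G → ZMod 2) : Config G → ZMod 2 := fun b =>
  if h : Unc b.red then
    (if b.sign (pick b.red h) = some true then x (flip b (pick b.red h)) else 0)
  else 0

lemma hmap_apply (x : Config G → ZMod 2) (b : Config G) (h : Unc b.red) :
    hmap x b = if b.sign (pick b.red h) = some true then x (flip b (pick b.red h)) else 0 :=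
  dif_pos h

lemma dmap_eq_zero_of_not_unc (x : Config G → ZMod 2) (C : Config G) (h : ¬ Unc C.red) :
    dmap G x C = 0 := by
  rw [dmap_apply]
  have : Finset.univ.filter (fun w => C.sign w = some false) = ∅ := by
    apply Finset.filter_false_of_mem
    intro w _
    rw [(not_unc_iff C).mp h w]
    simp
  rw [this, Finset.sum_empty]

/-- Key homotopy identity (on kernel elements). -/
lemma homotopy (x : Config G → ZMod 2) (hx : ∀ C, dmap G x C = 0) (C : Config G) :
    dmap G (hmap x) C = if Unc C.red then x C else 0 := by
  by_cases h : Unc C.red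
  swap
  · rw [if_neg h]
    exact dmap_eq_zero_of_not_unc _ _ h
  rw [if_pos h, dmap_apply]
  set u := pick C.red h with hu
  have hCu : C.sign u ≠ none := pick_sign h
  have hflip_unc : ∀ w, Unc (flip C w).red := fun w => h
  have hpick_flip : ∀ w, pick (flip C w).red (hflip_unc w) = u := fun w => rfl
  have hterm : ∀ w, hmap x (flip C w) =
      if (flip C w).sign u = some true then x (flip (flip C w) u) else 0 := by
    intro w
    rw [hmap_apply x (flip C w) (hflip_unc w), hpick_flip w]
  obtain ⟨bu, hbu⟩ : ∃ b, C.sign u = some b := Option.ne_none_iff_exists'.mp hCu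
  cases bu
  · -- C.sign u = some false
    have humem : u ∈ Finset.univ.filter (fun w => C.sign w = some false) := by
      simp [hbu]
    rw [← Finset.add_sum_erase _ _ humem]
    have h1 : hmap x (flip C u) = x C := by
      rw [hterm u, flip_sign_self, hbu]
      simp [flip_flip]
    have h2 : ∀ w ∈ (Finset.univ.filter (fun w => C.sign w = some false)).erase u,
        hmap x (flip C w) = 0 := by
      intro w hw
      have hwne : w ≠ u := Finset.ne_of_mem_erase hw
      rw [hterm w, flip_sign_ne _ (Ne.symm hwne), hbu, if_neg (by simp)]
    rw [h1, Finset.sum_congr rfl h2, Finset.sum_const_zero, add_zero]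
  · -- C.sign u = some true
    have hune : ∀ w ∈ Finset.univ.filter (fun w => C.sign w = some false), w ≠ u := by
      intro w hw
      simp only [Finset.mem_filter, Finset.mem_univ, true_and] at hw
      intro hwu; rw [hwu, hbu] at hw; simp at hw
    have hsum : ∑ w ∈ Finset.univ.filter (fun w => C.sign w = some false), hmap x (flip C w)
        = ∑ w ∈ Finset.univ.filter (fun w => C.sign w = some false),
          x (flip (flip C w) u) := by
      refine Finset.sum_congr rfl fun w hw => ?_
      rw [hterm w, flip_sign_ne _ (Ne.symm (hune w hw)), hbu, if_pos rfl]
    rw [hsum]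
    -- use that x is in the kernel at flip C u
    have hker := hx (flip C u)
    rw [dmap_apply] at hker
    have hfilter : Finset.univ.filter (fun w => (flip C u).sign w = some false)
        = insert u (Finset.univ.filter (fun w => C.sign w = some false)) := by
      ext w
      simp only [Finset.mem_filter, Finset.mem_univ, true_and, Finset.mem_insert]
      by_cases hwu : w = u
      · subst hwu
        rw [flip_sign_self, hbu]
        simp
      · rw [flip_sign_ne _ hwu]
        simp [hwu]
    rw [hfilter, Finset.sum_insert (by
      simp only [Finset.mem_filter, Finset.mem_univ, true_and]
      rw [hbu]; simp)] at hker
    rw [flip_flip] at hker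
    have hcong : ∑ w ∈ Finset.univ.filter (fun w => C.sign w = some false),
        x (flip (flip C u) w) = ∑ w ∈ Finset.univ.filter (fun w => C.sign w = some false),
        x (flip (flip C w) u) := by
      refine Finset.sum_congr rfl fun w hw => ?_
      rw [flip_comm C (Ne.symm (hune w hw))]
    rw [hcong] at hker
    -- hker : x C + S = 0, goal : S = x C
    have := congrArg (fun t => x C + t) hker
    simp only [add_zero] at this
    rw [← add_assoc, CharTwo.add_self_eq_zero, zero_add] at this
    exact this

/-- The configuration attached to a perfect matching. -/
noncomputable def perfectConfig {R : Finset (Sym2 V)} (hR : IsPerfectMatching G R) :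
    Config G where
  red := R
  matching := hR.1
  sign := fun _ => none
  sign_none := fun v => by simpa using hR.2 v

lemma perfectConfig_unique {R : Finset (Sym2 V)} (hR : IsPerfectMatching G R)
    (huniq : ∀ R' : Finset (Sym2 V), IsPerfectMatching G R' → R' = R)
    (C : Config G) (hC : ¬ Unc C.red) : C = perfectConfig hR := by
  have hsign := (not_unc_iff C).mp hC
  have hperf : IsPerfectMatching G C.red := by
    refine ⟨C.matching, fun v => ?_⟩
    exact (C.sign_none v).mp (hsign v)
  apply Config.ext'
  · exact huniq _ hperf
  · funext v
    exact hsign v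

lemma not_unc_perfectConfig {R : Finset (Sym2 V)} (hR : IsPerfectMatching G R) :
    ¬ Unc (perfectConfig hR).red := by
  rw [not_unc_iff]
  intro v
  rfl

lemma flip_ne_perfectConfig {R : Finset (Sym2 V)} (hR : IsPerfectMatching G R)
    (C : Config G) (w : V) (hw : C.sign w = some false) : flip C w ≠ perfectConfig hR := by
  intro h
  have : (flip C w).sign w = none := by rw [h]; rfl
  rw [flip_sign_self, hw] at this
  simp at this
end Proof

/-- the total dimension of the cohomology of `(SC(T), d)` is `1` if `T`
admits a perfect matching and `0` otherwise. -/
theorem d_cohomology_dim (G : SimpleGraph V) (hG : G.IsTree) :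
    cohDim (dmap G) (dmap G) =
      if ∃ R : Finset (Sym2 V), IsPerfectMatching G R then 1 else 0 := by
  classical
  unfold cohDim
  set K := LinearMap.ker (dmap G) with hK
  set N := Submodule.comap K.subtype (LinearMap.range (dmap G)) with hN
  by_cases hex : ∃ R : Finset (Sym2 V), IsPerfectMatching G R
  · rw [if_pos hex]
    obtain ⟨R₀, hR₀⟩ := hex
    have huniq : ∀ R', IsPerfectMatching G R' → R' = R₀ :=
      fun R' hR' => perfect_matching_unique hG.IsAcyclic hR' hR₀
    set C₀ := perfectConfig hR₀ with hC₀
    set δ : Config G → ZMod 2 := fun C => if C = C₀ then 1 else 0 with hδ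
    have hδker : dmap G δ = 0 := by
      funext C
      show dmap G δ C = 0
      rw [dmap_apply]
      apply Finset.sum_eq_zero
      intro w hw
      simp only [Finset.mem_filter, Finset.mem_univ, true_and] at hw
      simp only [hδ]; exact if_neg (flip_ne_perfectConfig hR₀ C w hw)
    have hevalzero : ∀ z : Config G → ZMod 2, dmap G z C₀ = 0 :=
      fun z => dmap_eq_zero_of_not_unc z C₀ (not_unc_perfectConfig hR₀)
    have hker3 : ∀ x : Config G → ZMod 2, dmap G x = 0 → x C₀ = 0 →
        x ∈ LinearMap.range (dmap G) := by
      intro x hx hx0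
      refine ⟨hmap x, ?_⟩
      funext C
      rw [homotopy x (fun C' => by simpa using congrFun hx C') C]
      by_cases hC : Unc C.red
      · rw [if_pos hC]
      · rw [if_neg hC, perfectConfig_unique hR₀ huniq C hC, hx0]
    set φ : K →ₗ[ZMod 2] ZMod 2 :=
      (LinearMap.proj C₀ : (Config G → ZMod 2) →ₗ[ZMod 2] ZMod 2).comp K.subtype with hφ
    have hφval : ∀ y : K, φ y = y.1 C₀ := fun y => rfl
    have hNle : N ≤ LinearMap.ker φ := by
      rintro ⟨x, hx⟩ hmem
      obtain ⟨z, hz⟩ := hmem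
      rw [LinearMap.mem_ker, hφval]
      show x C₀ = 0
      have : dmap G z = x := hz
      rw [← this]
      exact hevalzero z
    set q := N.liftQ φ hNle with hq
    have hkerφ : LinearMap.ker φ ≤ N := by
      rintro ⟨x, hx⟩ hmem
      rw [LinearMap.mem_ker, hφval] at hmem
      have hx' : dmap G x = 0 := hx
      exact hker3 x hx' hmem
    have hinj : Function.Injective q :=
      LinearMap.ker_eq_bot.mp (Submodule.ker_liftQ_eq_bot N φ hNle hkerφ)
    have hδK : δ ∈ K := LinearMap.mem_ker.mpr hδker
    have hone : q (Submodule.Quotient.mk ⟨δ, hδK⟩) = 1 := by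
      rw [hq, Submodule.liftQ_apply, hφval]
      show (if C₀ = C₀ then (1 : ZMod 2) else 0) = 1
      rw [if_pos rfl]
    have hsurj : Function.Surjective q := by
      intro c
      refine ⟨Submodule.Quotient.mk (c • ⟨δ, hδK⟩), ?_⟩
      rw [Submodule.Quotient.mk_smul, LinearMap.map_smul, hone, smul_eq_mul, mul_one]
    have e : (K ⧸ N) ≃ₗ[ZMod 2] ZMod 2 := LinearEquiv.ofBijective q ⟨hinj, hsurj⟩
    rw [e.finrank_eq, Module.finrank_self]
  · rw [if_neg hex]
    have hall : ∀ C : Config G, Unc C.red := by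
      intro C
      by_contra hC
      exact hex ⟨C.red, C.matching, fun v => (C.sign_none v).mp ((not_unc_iff C).mp hC v)⟩
    have hNtop : N = ⊤ := by
      rw [Submodule.eq_top_iff']
      rintro ⟨x, hx⟩
      rw [hN, Submodule.mem_comap]
      have hx' : dmap G x = 0 := hx
      refine ⟨hmap x, ?_⟩
      funext C
      show dmap G (hmap x) C = x C
      rw [homotopy x (fun C' => by simpa using congrFun hx' C') C, if_pos (hall C)]
    haveI : Subsingleton (K ⧸ N) := Submodule.Quotient.subsingleton_iff.mpr hNtop
    exact Module.finrank_zero_of_subsingleton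

end Seifert
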